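/- SGD with SPS_max, convex case: if f_i are convex and L_i-smooth, then the iterates x^{k+1} = x^k − γ_k ∇f_i(x^k) with γ_k = min{(f_i(x^k) − f_i*)/‖∇f_i(x^k)‖², γ_b} (c = 1) satisfy E[f(x̄^K) − f(x*)] ≤ ‖x^0 − x*‖²/(αK) + 2σ²γ_b/α, where α = min{1/(2L_max), γ_b} and x̄^K = (1/K)Σ_{k=0}^{K−1} x^k. -/

import Mathlib

open scoped RealInnerProductSpace

/-- Descent lemma: a function with `L`-Lipschitz gradient satisfies the quadratic upper bound. -/
lemma descent_lemma' {E : Type*} [NormedAddCommGroup E] [InnerProductSpace ℝ E]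
    [CompleteSpace E]
    (f : E → ℝ) (g : E → E) (hg : ∀ x, HasGradientAt f (g x) x)
    (Lc : ℝ) (hlip : ∀ x y, ‖g x - g y‖ ≤ Lc * ‖x - y‖) (x y : E) :
    f y ≤ f x + ⟪g x, y - x⟫ + Lc / 2 * ‖y - x‖ ^ 2 := by
  set v := y - x with hv
  set φ : ℝ → ℝ := fun t => f (x + t • v) - t * ⟪g x, v⟫ - Lc / 2 * t ^ 2 * ‖v‖ ^ 2 with hφ
  have hc : ∀ t : ℝ, HasDerivAt (fun t : ℝ => x + t • v) v t := by
    intro t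
    simpa using ((hasDerivAt_id t).smul_const v).const_add x
  have hfc : ∀ t : ℝ, HasDerivAt (fun t : ℝ => f (x + t • v)) ⟪g (x + t • v), v⟫ t := by
    intro t
    have h1 := (hg (x + t • v)).hasFDerivAt.comp_hasDerivAt t (hc t)
    simpa [InnerProductSpace.toDual_apply_apply, Function.comp_def] using h1
  have hφ' : ∀ t : ℝ, HasDerivAt φ (⟪g (x + t • v), v⟫ - ⟪g x, v⟫ - Lc * t * ‖v‖ ^ 2) t := by
    intro t
    have h2 : HasDerivAt (fun t : ℝ => t * ⟪g x, v⟫) ⟪g x, v⟫ t := by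
      simpa using (hasDerivAt_id t).mul_const ⟪g x, v⟫
    have h3 : HasDerivAt (fun t : ℝ => Lc / 2 * t ^ 2 * ‖v‖ ^ 2) (Lc * t * ‖v‖ ^ 2) t := by
      have := ((hasDerivAt_pow 2 t).const_mul (Lc / 2)).mul_const (‖v‖ ^ 2)
      refine this.congr_deriv ?_
      rw [show (2:ℕ) - 1 = 1 from rfl]
      push_cast
      ring
    have h7 := ((hfc t).sub h2).sub h3
    simp only [Pi.sub_def] at h7
    exact h7
  have hanti : AntitoneOn φ (Set.Icc 0 1) := by
    apply antitoneOn_of_deriv_nonpos (convex_Icc 0 1)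
    · exact fun t _ => ((hφ' t).continuousAt).continuousWithinAt
    · exact fun t _ => ((hφ' t).differentiableAt).differentiableWithinAt
    · intro t ht
      rw [(hφ' t).deriv]
      have ht' : t ∈ Set.Ioo (0:ℝ) 1 := by rwa [interior_Icc] at ht
      have h4 : ⟪g (x + t • v) - g x, v⟫ ≤ ‖g (x + t • v) - g x‖ * ‖v‖ :=
        real_inner_le_norm _ _
      have h5 : ‖g (x + t • v) - g x‖ ≤ Lc * (t * ‖v‖) := by
        have := hlip (x + t • v) x
        simpa [norm_smul, abs_of_nonneg ht'.1.le, mul_assoc] using this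
      have h6 : ⟪g (x + t • v), v⟫ - ⟪g x, v⟫ ≤ Lc * t * ‖v‖ ^ 2 := by
        rw [← inner_sub_left]
        calc ⟪g (x + t • v) - g x, v⟫ ≤ ‖g (x + t • v) - g x‖ * ‖v‖ := h4
          _ ≤ Lc * (t * ‖v‖) * ‖v‖ := by
              apply mul_le_mul_of_nonneg_right h5 (norm_nonneg v)
          _ = Lc * t * ‖v‖ ^ 2 := by ring
      linarith
  have h01 := hanti (Set.left_mem_Icc.2 zero_le_one) (Set.right_mem_Icc.2 zero_le_one) zero_le_one
  simp only [hφ] at h01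
  have : x + (1:ℝ) • v = y := by simp [hv]
  rw [this] at h01
  simp at h01
  linarith

/-- The one-step inequality for SGD with the `SPS_max` stepsize. -/
lemma sps_step {E : Type*} [NormedAddCommGroup E] [InnerProductSpace ℝ E]
    [CompleteSpace E] (f : E → ℝ)
    (G : E → E)
    (hgrad : ∀ x, HasGradientAt f (G x) x)
    (hconv : ∀ x y, f y ≥ f x + ⟪G x, y - x⟫)
    (Li : ℝ) (hLi : 0 < Li)
    (hsmooth : ∀ x y, ‖G x - G y‖ ≤ Li * ‖x - y‖)
    (fs : ℝ) (hfs : IsGLB (Set.range f) fs)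
    (xstar : E)
    (γb : ℝ) (hγb : 0 < γb) (α : ℝ) (hαpos : 0 < α)
    (hα1 : α ≤ 1 / (2 * Li)) (hα2 : α ≤ γb) (x : E) :
    α * (f x - f xstar) + ‖x - (min ((f x - fs) / ‖G x‖ ^ 2) γb) • G x - xstar‖ ^ 2 ≤
      ‖x - xstar‖ ^ 2 + 2 * γb * (f xstar - fs) := by
  have hlb : ∀ y, fs ≤ f y := fun y => hfs.1 ⟨y, rfl⟩
  set g := G x with hg
  set D := f x - fs with hDdef
  have hD : 0 ≤ D := sub_nonneg.2 (hlb x)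
  set γ := min (D / ‖g‖ ^ 2) γb with hγdef
  have hγ0 : (0:ℝ) ≤ γ := le_min (div_nonneg hD (by positivity)) hγb.le
  have hγle : γ ≤ γb := min_le_right _ _
  have hstar : 0 ≤ f xstar - fs := sub_nonneg.2 (hlb xstar)
  have hγg : γ * ‖g‖ ^ 2 ≤ D := by
    rcases eq_or_ne g 0 with h0 | h0
    · simp [h0, hD]
    · have hgp : (0:ℝ) < ‖g‖ ^ 2 := pow_pos (norm_pos_iff.mpr h0) 2
      have : γ ≤ D / ‖g‖ ^ 2 := min_le_left _ _
      exact (le_div_iff₀ hgp).mp this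
  have hratio : ‖g‖ ^ 2 ≤ 2 * Li * D := by
    have h1 := descent_lemma' f G hgrad Li hsmooth x (x - Li⁻¹ • g)
    have e1 : x - Li⁻¹ • g - x = -(Li⁻¹ • g) := by abel
    rw [e1] at h1
    have e2 : ⟪g, -(Li⁻¹ • g)⟫ = -(Li⁻¹ * ‖g‖ ^ 2) := by
      rw [inner_neg_right, real_inner_smul_right, real_inner_self_eq_norm_sq]
    have e3 : ‖-(Li⁻¹ • g)‖ ^ 2 = Li⁻¹ ^ 2 * ‖g‖ ^ 2 := by
      rw [norm_neg, norm_smul, mul_pow, Real.norm_eq_abs, sq_abs]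
    rw [e2, e3] at h1
    have h2 : fs ≤ f (x - Li⁻¹ • g) := hlb _
    have h3 : Li / 2 * (Li⁻¹ ^ 2 * ‖g‖ ^ 2) = Li⁻¹ / 2 * ‖g‖ ^ 2 := by
      field_simp
    rw [h3] at h1
    have h4 : Li⁻¹ * ‖g‖ ^ 2 ≤ 2 * D := by linarith
    have h5 : Li * (Li⁻¹ * ‖g‖ ^ 2) ≤ Li * (2 * D) :=
      mul_le_mul_of_nonneg_left h4 hLi.le
    have h6 : Li * (Li⁻¹ * ‖g‖ ^ 2) = ‖g‖ ^ 2 := by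
      field_simp
    calc ‖g‖ ^ 2 = Li * (Li⁻¹ * ‖g‖ ^ 2) := h6.symm
      _ ≤ Li * (2 * D) := h5
      _ = 2 * Li * D := by ring
  have hαγD : α * D ≤ γ * D := by
    rcases eq_or_ne g 0 with h0 | h0
    · have hz : f x ≤ fs := by
        apply hfs.2
        rintro y ⟨z, rfl⟩
        have := hconv x z
        rw [← hg, h0] at this
        simpa using this
      have : D = 0 := le_antisymm (by simpa [hDdef] using hz) hD
      simp [this]
    · have hgp : (0:ℝ) < ‖g‖ ^ 2 := pow_pos (norm_pos_iff.mpr h0) 2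
      have h1 : 1 / (2 * Li) ≤ D / ‖g‖ ^ 2 := by
        rw [div_le_div_iff₀ (by positivity) hgp]
        nlinarith [hratio]
      have h2 : α ≤ γ := le_min (le_trans hα1 h1) hα2
      exact mul_le_mul_of_nonneg_right h2 hD
  have hconv' : f x - f xstar ≤ ⟪g, x - xstar⟫ := by
    have h := hconv x xstar
    have e : ⟪g, xstar - x⟫ = -⟪g, x - xstar⟫ := by rw [← inner_neg_right, neg_sub]
    rw [e] at h
    linarith
  have hexp : ‖x - γ • g - xstar‖ ^ 2 =
      ‖x - xstar‖ ^ 2 - 2 * (γ * ⟪g, x - xstar⟫) + γ ^ 2 * ‖g‖ ^ 2 := by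
    have e : x - γ • g - xstar = (x - xstar) - γ • g := by abel
    rw [e, norm_sub_sq_real, real_inner_smul_right, real_inner_comm, norm_smul,
      mul_pow, Real.norm_eq_abs, sq_abs]
  rw [hexp]
  have hA : γ ^ 2 * ‖g‖ ^ 2 ≤ γ * D := by
    have := mul_le_mul_of_nonneg_left hγg hγ0
    nlinarith [this]
  have hB : γ * (f x - f xstar) ≤ γ * ⟪g, x - xstar⟫ :=
    mul_le_mul_of_nonneg_left hconv' hγ0
  have hC : γ * (f xstar - fs) ≤ γb * (f xstar - fs) :=
    mul_le_mul_of_nonneg_right hγle hstar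
  have hE : α * (f x - f xstar) = α * D - α * (f xstar - fs) := by
    rw [hDdef]; ring
  have hF : 0 ≤ α * (f xstar - fs) := mul_nonneg hαpos.le hstar
  have hsplit : γ * (f x - f xstar) = γ * D - γ * (f xstar - fs) := by
    rw [hDdef]; ring
  nlinarith [hA, hB, hC, hE, hF, hαγD, hsplit]

/-- Splitting a sum over `(K+1)`-tuples into a double sum via `Fin.snoc`. -/
lemma sum_split {n K : ℕ} (φ : (Fin (K + 1) → Fin n) → ℝ) :
    ∑ ω : Fin (K + 1) → Fin n, φ ω =
      ∑ ω : Fin K → Fin n, ∑ i : Fin n, φ (Fin.snoc ω i) := by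
  have h1 := Fintype.sum_equiv (Fin.snocEquiv (fun _ => Fin n))
    (fun p => φ (Fin.snoc p.2 p.1)) φ (fun p => rfl)
  rw [← h1, Fintype.sum_prod_type]
  exact Finset.sum_comm

/-- Marginalising a sum over `K`-tuples of a function of the first `k` coordinates. -/
lemma sum_restrict {n : ℕ} : ∀ (K k : ℕ) (h : k ≤ K) (φ : (Fin k → Fin n) → ℝ),
    ∑ ω : Fin K → Fin n, φ (fun j => ω (Fin.castLE h j)) =
      (n : ℝ) ^ (K - k) * ∑ ω : Fin k → Fin n, φ ω := by
  intro K
  induction K with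
  | zero => intro k h φ; interval_cases k; simp
  | succ K ih =>
    intro k h φ
    rcases Nat.eq_or_lt_of_le h with rfl | hlt
    · simp
    · have hk : k ≤ K := Nat.lt_succ_iff.mp hlt
      rw [sum_split (fun ω => φ (fun j => ω (Fin.castLE h j)))]
      have hre : ∀ (ω : Fin K → Fin n) (i : Fin n),
          (fun j => (Fin.snoc ω i : Fin (K+1) → Fin n) (Fin.castLE h j)) =
            (fun j => ω (Fin.castLE hk j)) := by
        intro ω i
        funext j
        have : (Fin.castLE h j : Fin (K+1)) = Fin.castSucc (Fin.castLE hk j) := by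
          ext; simp
        rw [this, Fin.snoc_castSucc]
      have : ∑ ω : Fin K → Fin n, ∑ i : Fin n,
          φ (fun j => (Fin.snoc ω i : Fin (K+1) → Fin n) (Fin.castLE h j)) =
          ∑ ω : Fin K → Fin n, (n : ℝ) * φ (fun j => ω (Fin.castLE hk j)) := by
        refine Finset.sum_congr rfl fun ω _ => ?_
        rw [Finset.sum_congr rfl fun i _ => by rw [hre ω i]]
        simp [Finset.sum_const, mul_comm]
      rw [this, ← Finset.mul_sum, ih k hk φ, ← mul_assoc]
      congr 1
      rw [← pow_succ']
      congr 1
      omega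

/-- Jensen-type inequality for a function with a subgradient at every point. -/
lemma jensen_avg {E : Type*} [NormedAddCommGroup E] [InnerProductSpace ℝ E]
    (F : E → ℝ) (GF : E → E) (hsub : ∀ a b, F a + ⟪GF a, b - a⟫ ≤ F b)
    (m : ℕ) (hm : 0 < m) (w : Fin m → E) :
    F ((m : ℝ)⁻¹ • ∑ k, w k) ≤ (m : ℝ)⁻¹ * ∑ k, F (w k) := by
  have hm' : (0:ℝ) < m := by exact_mod_cast hm
  set xb := (m : ℝ)⁻¹ • ∑ k, w k with hxb
  have h1 : ∀ k : Fin m, F xb + ⟪GF xb, w k - xb⟫ ≤ F (w k) := fun k => hsub xb (w k)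
  have h2 := Finset.sum_le_sum (fun k (_ : k ∈ Finset.univ) => h1 k)
  rw [Finset.sum_add_distrib, ← inner_sum] at h2
  have h3 : ∑ k : Fin m, (w k - xb) = 0 := by
    rw [Finset.sum_sub_distrib, Finset.sum_const, Finset.card_univ, Fintype.card_fin]
    rw [← Nat.cast_smul_eq_nsmul ℝ, smul_smul, mul_inv_cancel₀ hm'.ne', one_smul, sub_self]
  rw [h3, inner_zero_right, add_zero, Finset.sum_const, Finset.card_univ,
    Fintype.card_fin, nsmul_eq_mul] at h2
  have h4 : (m : ℝ)⁻¹ * ((m : ℝ) * F xb) ≤ (m : ℝ)⁻¹ * ∑ k, F (w k) :=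
    mul_le_mul_of_nonneg_left h2 (by positivity)
  rw [← mul_assoc, inv_mul_cancel₀ hm'.ne', one_mul] at h4
  exact h4

/-- SGD with `SPS_max` (`c = 1`) for convex smooth `f_i`:
`E[f(x̄^K) − f(x*)] ≤ ‖x^0 − x*‖²/(αK) + 2σ²γ_b/α`, where
`α = min{1/(2L_max), γ_b}` and `x̄^K` is the average of the first `K` iterates. -/
theorem stmt8 {d n : ℕ} (hn : 0 < n)
    (f : Fin n → EuclideanSpace ℝ (Fin d) → ℝ)
    (G : Fin n → EuclideanSpace ℝ (Fin d) → EuclideanSpace ℝ (Fin d))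
    (hgrad : ∀ i x, HasGradientAt (f i) (G i x) x)
    (hconv : ∀ i x y, f i y ≥ f i x + ⟪G i x, y - x⟫)
    (L : Fin n → ℝ) (hL : ∀ i, 0 < L i)
    (hsmooth : ∀ i x y, ‖G i x - G i y‖ ≤ L i * ‖x - y‖)
    (fstar : Fin n → ℝ) (hfstar : ∀ i, IsGLB (Set.range (f i)) (fstar i))
    (F : EuclideanSpace ℝ (Fin d) → ℝ) (hF : ∀ x, F x = (1 / (n : ℝ)) * ∑ i, f i x)
    (xstar : EuclideanSpace ℝ (Fin d)) (hxstar : ∀ y, F xstar ≤ F y)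
    (σ2 : ℝ) (hσ2 : σ2 = F xstar - (1 / (n : ℝ)) * ∑ i, fstar i)
    (Lmax : ℝ) (hLmax : Lmax = Finset.univ.sup' ⟨⟨0, hn⟩, Finset.mem_univ _⟩ L)
    (γb : ℝ) (hγb : 0 < γb)
    (α : ℝ) (hα : α = min (1 / (2 * Lmax)) γb)
    (x0 : EuclideanSpace ℝ (Fin d))
    (Y : (k : ℕ) → (Fin k → Fin n) → EuclideanSpace ℝ (Fin d))
    (hY0 : ∀ ω, Y 0 ω = x0)
    (hYstep : ∀ (k : ℕ) (ω : Fin (k + 1) → Fin n),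
      Y (k + 1) ω =
        Y k (fun j => ω j.castSucc) -
          (min ((f (ω (Fin.last k)) (Y k (fun j => ω j.castSucc)) -
                  fstar (ω (Fin.last k))) /
              ‖G (ω (Fin.last k)) (Y k (fun j => ω j.castSucc))‖ ^ 2) γb) •
            G (ω (Fin.last k)) (Y k (fun j => ω j.castSucc))) :
    ∀ K : ℕ, 0 < K →
      (1 / (n : ℝ) ^ K) * ∑ ω : Fin K → Fin n,
          (F ((K : ℝ)⁻¹ • ∑ k : Fin K, Y k.val fun j => ω (Fin.castLE k.isLt.le j)) -
            F xstar) ≤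
        ‖x0 - xstar‖ ^ 2 / (α * K) + 2 * σ2 * γb / α := by
  intro K hK
  have hn' : (0:ℝ) < n := by exact_mod_cast hn
  have hK' : (0:ℝ) < K := by exact_mod_cast hK
  have hlb : ∀ i x, fstar i ≤ f i x := fun i x => (hfstar i).1 ⟨x, rfl⟩
  have hLle : ∀ i, L i ≤ Lmax := fun i => by
    rw [hLmax]; exact Finset.le_sup' L (Finset.mem_univ i)
  have hLmaxpos : 0 < Lmax := lt_of_lt_of_le (hL ⟨0, hn⟩) (hLle _)
  have hαpos : 0 < α := by
    rw [hα]; exact lt_min (by positivity) hγb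
  have hα2 : α ≤ γb := by rw [hα]; exact min_le_right _ _
  have hα1 : ∀ i, α ≤ 1 / (2 * L i) := by
    intro i
    have h1 : α ≤ 1 / (2 * Lmax) := by rw [hα]; exact min_le_left _ _
    have h2 : 1 / (2 * Lmax) ≤ 1 / (2 * L i) :=
      one_div_le_one_div_of_le (by linarith [hL i]) (by nlinarith [hLle i])
    exact le_trans h1 h2
  have hkey := fun (i : Fin n) (x : EuclideanSpace ℝ (Fin d)) =>
    sps_step (f i) (G i) (hgrad i) (hconv i) (L i) (hL i) (hsmooth i) (fstar i)
      (hfstar i) xstar γb hγb α hαpos (hα1 i) hα2 x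
  -- expectation quantities
  set P : ℕ → ℝ :=
    fun k => (1/(n:ℝ)^k) * ∑ ω : Fin k → Fin n, (F (Y k ω) - F xstar) with hP
  set Sq : ℕ → ℝ :=
    fun k => (1/(n:ℝ)^k) * ∑ ω : Fin k → Fin n, ‖Y k ω - xstar‖^2 with hSq
  have hsum_f : ∀ x, ∑ i, f i x = (n:ℝ) * F x := fun x => by
    rw [hF x]; field_simp
  have hsum_sig : ∑ i, (f i xstar - fstar i) = (n:ℝ) * σ2 := by
    rw [Finset.sum_sub_distrib, hsum_f, hσ2]
    field_simp
  -- the one-step recursion in expectation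
  have hrec : ∀ k, α * P k + Sq (k+1) ≤ Sq k + 2*γb*σ2 := by
    intro k
    have hpt : ∀ ω : Fin k → Fin n,
        α * ((n:ℝ) * (F (Y k ω) - F xstar)) +
            ∑ i : Fin n, ‖Y (k+1) (Fin.snoc ω i) - xstar‖^2
          ≤ (n:ℝ) * ‖Y k ω - xstar‖^2 + 2*γb*((n:ℝ)*σ2) := by
      intro ω
      have hYs : ∀ i : Fin n, Y (k+1) (Fin.snoc ω i)
          = Y k ω - (min ((f i (Y k ω) - fstar i)/‖G i (Y k ω)‖^2) γb) • G i (Y k ω) := by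
        intro i
        have h := hYstep k (Fin.snoc ω i)
        simpa [Fin.snoc_castSucc, Fin.snoc_last] using h
      have h1 := Finset.sum_le_sum (fun i (_ : i ∈ Finset.univ) => hkey i (Y k ω))
      rw [Finset.sum_add_distrib, Finset.sum_add_distrib] at h1
      have e1 : ∑ i, α * (f i (Y k ω) - f i xstar) = α * ((n:ℝ) * (F (Y k ω) - F xstar)) := by
        rw [← Finset.mul_sum, Finset.sum_sub_distrib, hsum_f, hsum_f]; ring
      have e2 : ∑ i : Fin n,
          ‖Y k ω - (min ((f i (Y k ω) - fstar i)/‖G i (Y k ω)‖^2) γb) • G i (Y k ω) - xstar‖^2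
          = ∑ i : Fin n, ‖Y (k+1) (Fin.snoc ω i) - xstar‖^2 := by
        refine Finset.sum_congr rfl fun i _ => ?_
        rw [hYs i]
      have e3 : ∑ _i : Fin n, ‖Y k ω - xstar‖^2 = (n:ℝ) * ‖Y k ω - xstar‖^2 := by
        rw [Finset.sum_const, Finset.card_univ, Fintype.card_fin, nsmul_eq_mul]
      have e4 : ∑ i, 2*γb*(f i xstar - fstar i) = 2*γb*((n:ℝ)*σ2) := by
        rw [← Finset.mul_sum, hsum_sig]
      rw [e1, e2, e3, e4] at h1
      exact h1
    have h2 := Finset.sum_le_sum (fun ω (_ : ω ∈ Finset.univ) => hpt ω)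
    rw [Finset.sum_add_distrib, Finset.sum_add_distrib] at h2
    set A := ∑ ω : Fin k → Fin n, (F (Y k ω) - F xstar) with hA
    set B := ∑ ω : Fin k → Fin n, ‖Y k ω - xstar‖^2 with hB
    set C := ∑ ω : Fin (k+1) → Fin n, ‖Y (k+1) ω - xstar‖^2 with hC
    have eA : ∑ ω : Fin k → Fin n, α * ((n:ℝ) * (F (Y k ω) - F xstar)) = α * ((n:ℝ) * A) := by
      rw [hA, ← Finset.mul_sum, ← Finset.mul_sum]
    have eC : ∑ ω : Fin k → Fin n, ∑ i : Fin n, ‖Y (k+1) (Fin.snoc ω i) - xstar‖^2 = C := by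
      rw [hC, sum_split (fun ω => ‖Y (k+1) ω - xstar‖^2)]
    have eB : ∑ ω : Fin k → Fin n, (n:ℝ) * ‖Y k ω - xstar‖^2 = (n:ℝ) * B := by
      rw [hB, ← Finset.mul_sum]
    have econst : ∑ _ω : Fin k → Fin n, 2*γb*((n:ℝ)*σ2) = (n:ℝ)^k * (2*γb*((n:ℝ)*σ2)) := by
      rw [Finset.sum_const, Finset.card_univ, nsmul_eq_mul]
      congr 1
      simp [Fintype.card_fun]
    rw [eA, eC, eB, econst] at h2
    have hne : (n:ℝ) ≠ 0 := hn'.ne'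
    have goal1 : α * P k + Sq (k+1) = (1/(n:ℝ)^(k+1)) * (α * ((n:ℝ) * A) + C) := by
      simp only [hP, hSq, ← hA, ← hC]
      field_simp
      ring
    have goal2 : (1/(n:ℝ)^(k+1)) * ((n:ℝ) * B + (n:ℝ)^k * (2*γb*((n:ℝ)*σ2)))
        = Sq k + 2*γb*σ2 := by
      simp only [hSq, ← hB]
      field_simp
      ring
    rw [goal1, ← goal2]
    exact mul_le_mul_of_nonneg_left h2 (by positivity)
  -- telescoping
  have htel : ∀ m : ℕ, α * ∑ k ∈ Finset.range m, P k + Sq m ≤ Sq 0 + m*(2*γb*σ2) := by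
    intro m
    induction m with
    | zero => simp
    | succ m ih =>
      rw [Finset.sum_range_succ]
      push_cast
      have := hrec m
      linarith
  have hSq0 : Sq 0 = ‖x0 - xstar‖^2 := by
    simp [hSq, hY0]
  have hSqK : 0 ≤ Sq K := by
    simp only [hSq]
    apply mul_nonneg (by positivity)
    exact Finset.sum_nonneg fun ω _ => by positivity
  have hPsum : α * ∑ k ∈ Finset.range K, P k ≤ ‖x0 - xstar‖^2 + K*(2*γb*σ2) := by
    have := htel K
    rw [hSq0] at this
    linarith
  -- the subgradient of F and Jensen
  have hFsub : ∀ a b, F a + ⟪(n:ℝ)⁻¹ • ∑ i, G i a, b - a⟫ ≤ F b := by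
    intro a b
    have h1 : ∑ i, (f i a + ⟪G i a, b - a⟫) ≤ ∑ i, f i b :=
      Finset.sum_le_sum (fun i _ => hconv i a b)
    rw [Finset.sum_add_distrib, ← sum_inner] at h1
    rw [hF a, hF b, real_inner_smul_left]
    have h2 := mul_le_mul_of_nonneg_left h1 (by positivity : (0:ℝ) ≤ (n:ℝ)⁻¹)
    rw [mul_add] at h2
    rw [one_div]
    linarith
  have hjen : ∀ ω : Fin K → Fin n,
      F ((K:ℝ)⁻¹ • ∑ k : Fin K, Y k.val fun j => ω (Fin.castLE k.isLt.le j)) - F xstar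
        ≤ (K:ℝ)⁻¹ * ∑ k : Fin K,
            (F (Y k.val fun j => ω (Fin.castLE k.isLt.le j)) - F xstar) := by
    intro ω
    have h1 := jensen_avg F (fun a => (n:ℝ)⁻¹ • ∑ i, G i a) hFsub K hK
      (fun k : Fin K => Y k.val fun j => ω (Fin.castLE k.isLt.le j))
    have h2 : (K:ℝ)⁻¹ * ∑ k : Fin K,
        (F (Y k.val fun j => ω (Fin.castLE k.isLt.le j)) - F xstar)
        = (K:ℝ)⁻¹ * (∑ k : Fin K,
            F (Y k.val fun j => ω (Fin.castLE k.isLt.le j))) - F xstar := by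
      rw [Finset.sum_sub_distrib, Finset.sum_const, Finset.card_univ, Fintype.card_fin,
        nsmul_eq_mul, mul_sub, ← mul_assoc, inv_mul_cancel₀ hK'.ne', one_mul]
    rw [h2]
    have := h1
    linarith
  -- marginalisation
  have hmarg : ∀ (k : ℕ) (h : k ≤ K),
      (1/(n:ℝ)^K) * ∑ ω : Fin K → Fin n,
          (F (Y k fun j => ω (Fin.castLE h j)) - F xstar) = P k := by
    intro k h
    rw [sum_restrict K k h (fun ω => F (Y k ω) - F xstar)]
    simp only [hP]
    rw [← mul_assoc]
    congr 1
    rw [pow_sub₀ _ hn'.ne' h]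
    field_simp
  -- put everything together
  have step1 : (1/(n:ℝ)^K) * ∑ ω : Fin K → Fin n,
      (F ((K:ℝ)⁻¹ • ∑ k : Fin K, Y k.val fun j => ω (Fin.castLE k.isLt.le j)) - F xstar)
      ≤ (1/(n:ℝ)^K) * ∑ ω : Fin K → Fin n, ((K:ℝ)⁻¹ * ∑ k : Fin K,
          (F (Y k.val fun j => ω (Fin.castLE k.isLt.le j)) - F xstar)) :=
    mul_le_mul_of_nonneg_left (Finset.sum_le_sum fun ω _ => hjen ω) (by positivity)
  have step2 : (1/(n:ℝ)^K) * ∑ ω : Fin K → Fin n, ((K:ℝ)⁻¹ * ∑ k : Fin K,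
        (F (Y k.val fun j => ω (Fin.castLE k.isLt.le j)) - F xstar))
      = (K:ℝ)⁻¹ * ∑ k ∈ Finset.range K, P k := by
    rw [← Finset.mul_sum, Finset.sum_comm]
    rw [← Fin.sum_univ_eq_sum_range P]
    rw [Finset.mul_sum, Finset.mul_sum, Finset.mul_sum]
    refine Finset.sum_congr rfl fun k _ => ?_
    rw [← mul_assoc, mul_comm ((1:ℝ)/(n:ℝ)^K) ((K:ℝ)⁻¹), mul_assoc]
    congr 1
    exact hmarg k.val k.isLt.le
  have step3 : (K:ℝ)⁻¹ * ∑ k ∈ Finset.range K, P k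
      ≤ ‖x0 - xstar‖ ^ 2 / (α * K) + 2 * σ2 * γb / α := by
    have h1 : ∑ k ∈ Finset.range K, P k ≤ (‖x0 - xstar‖^2 + K*(2*γb*σ2)) / α := by
      rw [le_div_iff₀ hαpos]
      nlinarith [hPsum]
    have h2 : (K:ℝ)⁻¹ * ∑ k ∈ Finset.range K, P k
        ≤ (K:ℝ)⁻¹ * ((‖x0 - xstar‖^2 + K*(2*γb*σ2)) / α) :=
      mul_le_mul_of_nonneg_left h1 (by positivity)
    have h3 : (K:ℝ)⁻¹ * ((‖x0 - xstar‖^2 + K*(2*γb*σ2)) / α)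
        = ‖x0 - xstar‖ ^ 2 / (α * K) + 2 * σ2 * γb / α := by
      field_simp
    linarith
  calc (1 / (n : ℝ) ^ K) * ∑ ω : Fin K → Fin n,
      (F ((K : ℝ)⁻¹ • ∑ k : Fin K, Y k.val fun j => ω (Fin.castLE k.isLt.le j)) - F xstar)
      ≤ (K:ℝ)⁻¹ * ∑ k ∈ Finset.range K, P k := by rw [← step2]; exact step1
    _ ≤ ‖x0 - xstar‖ ^ 2 / (α * K) + 2 * σ2 * γb / α := step3
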